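/- Fix α ∈ (0,1), let a be a scaling function, and let x < 0. Then (a(θ)/θ) · log F_θ((θ/a(θ))x + β(α,θ)) → −∞ as θ → ∞ (with the convention log 0 = −∞ on the set where the argument of F_θ is nonpositive). -/

import Mathlib

open MeasureTheory Filter Set

/-- `c_α = α / Γ(1-α)`. -/
noncomputable def cAlpha (α : ℝ) : ℝ := α / Real.Gamma (1 - α)

/-- `β(α,θ) = log θ - (α+1) log log θ - log Γ(1-α)`. -/
noncomputable def betaShift (α θ : ℝ) : ℝ :=
  Real.log θ - (α + 1) * Real.log (Real.log θ) - Real.log (Real.Gamma (1 - α))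

/-- The distribution function of the largest jump `V₁(T)`:
`F_θ(s) = (1 + c_α s^{-α} ∫_1^∞ z^{-(1+α)} e^{-sz} dz)^{-θ/α}` for `s > 0`, and `0` for `s ≤ 0`. -/
noncomputable def Fdist (α θ s : ℝ) : ℝ :=
  if 0 < s then
    (1 + cAlpha α * s ^ (-α) *
        ∫ z in Set.Ioi (1:ℝ), z ^ (-(1 + α)) * Real.exp (-(s * z))) ^ (-(θ / α))
  else 0

/-- `log F_θ(s)` as an extended real, with the convention `log 0 = -∞` where `s ≤ 0`. -/
noncomputable def logFdist (α θ s : ℝ) : EReal :=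
  if 0 < s then ((Real.log (Fdist α θ s) : ℝ) : EReal) else ⊥

lemma aux_integrable (α s : ℝ) (hα : 0 < α) (hs : 0 < s) :
    IntegrableOn (fun z : ℝ => z ^ (-(1 + α)) * Real.exp (-(s * z))) (Ioi 1) := by
  have hmeas : AEStronglyMeasurable (fun z : ℝ => z ^ (-(1 + α)) * Real.exp (-(s * z)))
      (volume.restrict (Ioi (1:ℝ))) := by
    apply ContinuousOn.aestronglyMeasurable _ measurableSet_Ioi
    apply ContinuousOn.mul
    · exact ContinuousOn.rpow_const continuousOn_id
        (fun z hz => Or.inl (ne_of_gt (lt_trans one_pos hz)))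
    · exact (Real.continuous_exp.comp ((continuous_const.mul continuous_id).neg)).continuousOn
  apply Integrable.mono' (g := fun z : ℝ => Real.exp (-s * z))
  · exact exp_neg_integrableOn_Ioi 1 hs
  · exact hmeas
  · filter_upwards [ae_restrict_mem measurableSet_Ioi] with z hz
    have hz1 : (1:ℝ) ≤ z := le_of_lt hz
    have h1 : z ^ (-(1 + α)) ≤ 1 :=
      Real.rpow_le_one_of_one_le_of_nonpos hz1 (by linarith)
    have h0 : 0 ≤ z ^ (-(1 + α)) := Real.rpow_nonneg (by linarith) _
    have : ‖z ^ (-(1 + α)) * Real.exp (-(s * z))‖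
        = z ^ (-(1 + α)) * Real.exp (-(s * z)) := by
      rw [Real.norm_eq_abs, abs_of_nonneg (mul_nonneg h0 (Real.exp_pos _).le)]
    rw [this, neg_mul]
    calc z ^ (-(1 + α)) * Real.exp (-(s * z)) ≤ 1 * Real.exp (-(s * z)) := by
          gcongr
      _ = Real.exp (-(s * z)) := one_mul _

lemma aux_integral_lb (α s : ℝ) (hα : 0 < α) (hα1 : α ≤ 1) (hs : 0 < s) :
    Real.exp (-(s + 1)) / 4 * min 1 (1 / s)
      ≤ ∫ z in Ioi (1:ℝ), z ^ (-(1 + α)) * Real.exp (-(s * z)) := by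
  set b : ℝ := 1 + min 1 (1 / s) with hb
  have hmin0 : 0 < min 1 (1 / s) := lt_min one_pos (by positivity)
  have hb1 : (1:ℝ) < b := by simp only [hb]; linarith
  have hb2 : b ≤ 2 := by
    have : min 1 (1/s) ≤ 1 := min_le_left _ _
    simp only [hb]; linarith
  have hbs : s * b ≤ s + 1 := by
    have h1 : min 1 (1/s) ≤ 1/s := min_le_right _ _
    have : s * min 1 (1/s) ≤ s * (1/s) := by gcongr
    have hss : s * (1/s) = 1 := by field_simp
    simp only [hb, mul_add, mul_one]
    linarith
  have hInt := aux_integrable α s hα hs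
  have hnn : ∀ z ∈ Ioi (1:ℝ), 0 ≤ z ^ (-(1 + α)) * Real.exp (-(s * z)) := fun z hz =>
    mul_nonneg (Real.rpow_nonneg (by linarith [mem_Ioi.1 hz]) _) (Real.exp_pos _).le
  calc Real.exp (-(s + 1)) / 4 * min 1 (1 / s)
      = ∫ _z in Ioc (1:ℝ) b, Real.exp (-(s + 1)) / 4 := by
        rw [setIntegral_const, measureReal_def, Real.volume_Ioc, ENNReal.toReal_ofReal (by linarith : (0:ℝ) ≤ b - 1)]
        have : b - 1 = min 1 (1/s) := by simp [hb]
        rw [this, smul_eq_mul, mul_comm]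
    _ ≤ ∫ z in Ioc (1:ℝ) b, z ^ (-(1 + α)) * Real.exp (-(s * z)) := by
        apply setIntegral_mono_on
        · exact integrableOn_const measure_Ioc_lt_top.ne
        · exact hInt.mono_set Ioc_subset_Ioi_self
        · exact measurableSet_Ioc
        · intro z hz
          obtain ⟨hz1, hzb⟩ := hz
          have hz0 : (0:ℝ) < z := lt_trans one_pos hz1
          have hz2 : z ≤ 2 := le_trans hzb hb2
          -- z ^ (-(1+α)) ≥ 1/4
          have hp : z ^ ((1:ℝ) + α) ≤ 4 := by
            calc z ^ ((1:ℝ) + α) ≤ z ^ (2:ℝ) :=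
                  Real.rpow_le_rpow_of_exponent_le hz1.le (by linarith)
              _ = z ^ (2:ℕ) := by rw [show (2:ℝ) = ((2:ℕ):ℝ) by norm_num, Real.rpow_natCast]
              _ ≤ 4 := by nlinarith
          have hppos : 0 < z ^ ((1:ℝ) + α) := Real.rpow_pos_of_pos hz0 _
          have h4 : (1:ℝ)/4 ≤ z ^ (-(1 + α)) := by
            rw [Real.rpow_neg hz0.le]
            rw [div_le_iff₀ (by norm_num : (0:ℝ) < 4)]
            rw [inv_mul_eq_div, le_div_iff₀ hppos]
            linarith
          have hexp : Real.exp (-(s + 1)) ≤ Real.exp (-(s * z)) := by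
            apply Real.exp_le_exp.2
            have : s * z ≤ s * b := mul_le_mul_of_nonneg_left hzb hs.le
            linarith
          calc Real.exp (-(s + 1)) / 4 = 1/4 * Real.exp (-(s + 1)) := by ring
            _ ≤ z ^ (-(1 + α)) * Real.exp (-(s * z)) := by
                exact mul_le_mul h4 hexp (Real.exp_pos _).le (by linarith)
    _ ≤ ∫ z in Ioi (1:ℝ), z ^ (-(1 + α)) * Real.exp (-(s * z)) := by
        apply setIntegral_mono_set hInt
        · filter_upwards [ae_restrict_mem measurableSet_Ioi] with z hz using hnn z hz
        · exact (Ioc_subset_Ioi_self).eventuallyLE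

lemma aux_exp_div {c : ℝ} (hc : 0 < c) (K : ℝ) (hK : 0 < K) :
    Tendsto (fun u : ℝ => K * Real.exp (c * u) / u) atTop atTop := by
  have h1 : Tendsto (fun v : ℝ => Real.exp v / v) atTop atTop := by
    simpa using Real.tendsto_exp_div_pow_atTop 1
  have h2 : Tendsto (fun u : ℝ => c * u) atTop atTop :=
    Tendsto.const_mul_atTop hc tendsto_id
  have h3 := (h1.comp h2).const_mul_atTop (mul_pos hK hc)
  apply h3.congr'
  filter_upwards [eventually_gt_atTop (0:ℝ)] with u hu
  show K * c * (Real.exp (c * u) / (c * u)) = K * Real.exp (c * u) / u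
  field_simp

/-- For `α ∈ (0,1)`, a scaling function `a` (`a(θ) → ∞`, `a(θ)/θ → 0`) and `x < 0`,
`(a(θ)/θ) log F_θ((θ/a(θ)) x + β(α,θ)) → -∞` as `θ → ∞`, with the convention `log 0 = -∞`
where the argument of `F_θ` is nonpositive. -/
theorem mdp_lower_neg (α : ℝ) (hα : α ∈ Set.Ioo (0:ℝ) 1)
    (a : ℝ → ℝ) (hapos : ∀ θ > (0:ℝ), 0 < a θ)
    (ha : Filter.Tendsto a Filter.atTop Filter.atTop)
    (ha' : Filter.Tendsto (fun θ => a θ / θ) Filter.atTop (nhds 0))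
    (x : ℝ) (hx : x < 0) :
    Filter.Tendsto
      (fun θ : ℝ => ((a θ / θ : ℝ) : EReal) * logFdist α θ (θ / a θ * x + betaShift α θ))
      Filter.atTop (nhds ⊥) := by
  obtain ⟨hα0, hα1⟩ := hα
  have hΓ : 0 < Real.Gamma (1 - α) := Real.Gamma_pos_of_pos (by linarith)
  have hc : 0 < cAlpha α := div_pos hα0 hΓ
  set c : ℝ := cAlpha α with hcdef
  set Γ' : ℝ := Real.Gamma (1 - α) with hΓdef
  set K : ℝ := c * Γ' / (16 * Real.exp 1) with hKdef
  have hK : 0 < K := by positivity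
  set c1 : ℝ := c * Real.exp (-2) / 4 with hc1def
  have hc1 : 0 < c1 := by positivity
  set m : ℝ → ℝ := fun θ => min 1 (min c1 (K * Real.exp (|x| * (θ / a θ)) / θ)) with hmdef
  set g : ℝ → ℝ := fun θ => a θ * m θ / (2 * α) with hgdef
  have hxabs : 0 < |x| := abs_pos.2 (ne_of_lt hx)
  have hapos' : ∀ᶠ θ in atTop, 0 < a θ := ha.eventually_gt_atTop 0
  -- θ / a θ → ∞
  have ht : Tendsto (fun θ => θ / a θ) atTop atTop := by
    have h0 : ∀ᶠ θ in atTop, a θ / θ ∈ Ioi (0:ℝ) := by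
      filter_upwards [hapos', eventually_gt_atTop (0:ℝ)] with θ h1 h2
      exact div_pos h1 h2
    have h1 : Tendsto (fun θ => a θ / θ) atTop (nhdsWithin 0 (Ioi 0)) :=
      tendsto_nhdsWithin_of_tendsto_nhds_of_eventually_within _ ha' h0
    have h2 : Tendsto (fun θ => (a θ / θ)⁻¹) atTop atTop := h1.inv_tendsto_nhdsGT_zero
    apply h2.congr'
    filter_upwards [hapos', eventually_gt_atTop (0:ℝ)] with θ h1 h2
    rw [inv_div]
  have hT3 : Tendsto (fun θ => K * Real.exp (|x| * (θ / a θ)) / (θ / a θ)) atTop atTop :=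
    (aux_exp_div hxabs K hK).comp ht
  -- Step 1 : g → ∞
  have hg : Tendsto g atTop atTop := by
    rw [tendsto_atTop]
    intro bb
    filter_upwards [ha.eventually_ge_atTop (max 1 (2 * α * bb)),
      (ha.atTop_mul_const hc1).eventually_ge_atTop (2 * α * bb),
      hT3.eventually_ge_atTop (2 * α * bb), hapos',
      eventually_gt_atTop (0:ℝ)] with θ h1 h2 h3 h4 h5
    have hEq : a θ * (K * Real.exp (|x| * (θ / a θ)) / θ)
        = K * Real.exp (|x| * (θ / a θ)) / (θ / a θ) := by
      field_simp
    have hmm : 2 * α * bb ≤ a θ * m θ := by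
      simp only [hmdef]
      rw [mul_min_of_nonneg _ _ h4.le, mul_min_of_nonneg _ _ h4.le]
      refine le_min ?_ (le_min ?_ ?_)
      · rw [mul_one]; exact le_trans (le_max_right _ _) h1
      · exact h2
      · rw [hEq]; exact h3
    show bb ≤ a θ * m θ / (2 * α)
    rw [le_div_iff₀ (by linarith)]
    nlinarith
  -- Step 2 : eventual bound
  have hstep2 : ∀ᶠ θ in atTop,
      ((a θ / θ : ℝ) : EReal) * logFdist α θ (θ / a θ * x + betaShift α θ)
        ≤ ((-(g θ) : ℝ) : EReal) := by
    filter_upwards [eventually_gt_atTop (1:ℝ), hapos',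
      Real.tendsto_log_atTop.eventually_ge_atTop (max 1 (-(Real.log Γ')))] with θ hθ1 haθ hLlarge
    have hθ0 : (0:ℝ) < θ := lt_trans one_pos hθ1
    set t : ℝ := θ / a θ with htdef
    set L : ℝ := Real.log θ with hLdef
    have hL1 : 1 ≤ L := le_trans (le_max_left _ _) hLlarge
    have hLC : -(Real.log Γ') ≤ L := le_trans (le_max_right _ _) hLlarge
    have hL0 : 0 < L := lt_of_lt_of_le one_pos hL1
    have ht0 : 0 < t := div_pos hθ0 haθ
    set s : ℝ := t * x + betaShift α θ with hsdef
    have hsval : s = t * x + (L - (α + 1) * Real.log L - Real.log Γ') := by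
      rw [hsdef, betaShift]
    by_cases hs : 0 < s
    · -- positive argument
      set I : ℝ := ∫ z in Ioi (1:ℝ), z ^ (-(1 + α)) * Real.exp (-(s * z)) with hIdef
      have hI0 : 0 ≤ I := by
        apply setIntegral_nonneg measurableSet_Ioi
        intro z hz
        exact mul_nonneg (Real.rpow_nonneg (by linarith [mem_Ioi.1 hz]) _) (Real.exp_pos _).le
      have hIlb := aux_integral_lb α s hα0 hα1.le hs
      set G : ℝ := c * s ^ (-α) * I with hGdef
      have hG0 : 0 ≤ G :=
        mul_nonneg (mul_nonneg hc.le (Real.rpow_nonneg hs.le _)) hI0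
      have h1G : (0:ℝ) < 1 + G := by linarith
      have hm1 : m θ ≤ 1 := min_le_left _ _
      have hm0 : 0 < m θ := lt_min one_pos (lt_min hc1 (by positivity))
      -- the key analytic bound
      have hmG : m θ ≤ G := by
        by_cases hs1 : s ≤ 1
        · refine le_trans (le_trans (min_le_right _ _) (min_le_left _ _)) ?_
          have hmin : min 1 (1 / s) = 1 := min_eq_left (one_le_one_div hs hs1)
          rw [hmin, mul_one] at hIlb
          have hA : 1 ≤ s ^ (-α) :=
            Real.one_le_rpow_of_pos_of_le_one_of_nonpos hs hs1 (by linarith)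
          have hexp : Real.exp (-2) ≤ Real.exp (-(s + 1)) :=
            Real.exp_le_exp.2 (by linarith)
          calc c1 = c * (Real.exp (-2) / 4) := by rw [hc1def]; ring
            _ ≤ c * (Real.exp (-(s + 1)) / 4) := by gcongr
            _ ≤ c * I := by gcongr
            _ = c * 1 * I := by ring
            _ ≤ c * s ^ (-α) * I := by gcongr
        · push_neg at hs1
          refine le_trans (le_trans (min_le_right _ _) (min_le_right _ _)) ?_
          have hs2L : s ≤ 2 * L := by
            have h1 : t * x ≤ 0 := mul_nonpos_of_nonneg_of_nonpos ht0.le hx.le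
            have h2 : 0 ≤ Real.log L := Real.log_nonneg hL1
            have h3 : 0 ≤ (α + 1) * Real.log L := mul_nonneg (by linarith) h2
            rw [hsval]; linarith
          have hmin : min 1 (1 / s) = 1 / s :=
            min_eq_right ((div_le_one hs).2 hs1.le)
          rw [hmin] at hIlb
          have hEexp : Real.exp (-s)
              = Real.exp (|x| * t) * (L ^ (α + 1) * Γ') / θ := by
            have hxx : -s = |x| * t + ((α + 1) * Real.log L + Real.log Γ' - L) := by
              rw [hsval, abs_of_neg hx]; ring
            rw [hxx, Real.exp_add, Real.exp_sub, Real.exp_add]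
            rw [Real.exp_log hΓ, show Real.exp L = θ from Real.exp_log hθ0]
            rw [show Real.exp ((α + 1) * Real.log L) = L ^ (α + 1) by
              rw [Real.rpow_def_of_pos hL0, mul_comm]]
            ring
          have hA : (2 * L) ^ (-α) ≤ s ^ (-α) := by
            rw [Real.rpow_neg (by positivity), Real.rpow_neg hs.le]
            exact inv_anti₀ (Real.rpow_pos_of_pos hs α)
              (Real.rpow_le_rpow hs.le hs2L hα0.le)
          have h2L : (2 * L) ^ (-α) = 2 ^ (-α) * L ^ (-α) :=
            Real.mul_rpow (by norm_num) hL0.le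
          have h2a : (1:ℝ) / 2 ≤ 2 ^ (-α) := by
            have h := Real.rpow_le_rpow_of_exponent_le (by norm_num : (1:ℝ) ≤ 2)
              (by linarith : -(1:ℝ) ≤ -α)
            rwa [Real.rpow_neg_one, ← one_div] at h
          have hPpos : 0 < L ^ (α + 1) := Real.rpow_pos_of_pos hL0 _
          have hLL : L ^ (-α) = L / L ^ (α + 1) := by
            rw [eq_div_iff (ne_of_gt hPpos), ← Real.rpow_add hL0]
            norm_num
          have hchain : c * ((2 * L) ^ (-α)) * (Real.exp (-(s + 1)) / 4 * (1 / (2 * L)))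
              ≤ G := by
            have hstep : Real.exp (-(s + 1)) / 4 * (1 / (2 * L)) ≤ I := by
              refine le_trans ?_ hIlb
              have h1s : 1 / (2 * L) ≤ 1 / s := one_div_le_one_div_of_le hs hs2L
              exact mul_le_mul_of_nonneg_left h1s (by positivity)
            rw [hGdef]
            exact mul_le_mul (mul_le_mul le_rfl hA (by positivity) hc.le) hstep
              (by positivity) (by positivity)
          refine le_trans ?_ hchain
          have hsplit : Real.exp (-(s + 1)) = Real.exp (-s) * Real.exp (-1) := by
            rw [← Real.exp_add]; ring_nf
          rw [hsplit, hEexp, h2L, hLL]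
          have hEpos : 0 < Real.exp (|x| * t) := Real.exp_pos _
          have hRHS : c * (2 ^ (-α) * (L / L ^ (α + 1))) *
              (Real.exp (|x| * t) * (L ^ (α + 1) * Γ') / θ * Real.exp (-1) / 4 * (1 / (2 * L)))
              = 2 ^ (-α) * (c * Γ' * Real.exp (|x| * t) / (8 * Real.exp 1 * θ)) := by
            rw [Real.exp_neg]
            field_simp
            ring
          rw [hRHS, hKdef]
          have hhalf : c * Γ' / (16 * Real.exp 1) * Real.exp (|x| * t) / θ
              = (1 / 2) * (c * Γ' * Real.exp (|x| * t) / (8 * Real.exp 1 * θ)) := by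
            field_simp
            ring
          rw [hhalf]
          exact mul_le_mul_of_nonneg_right h2a (by positivity)
      -- from hmG to the log bound
      have hlog1 : m θ / 2 ≤ Real.log (1 + G) := by
        have l1 : Real.log (1 + m θ) ≤ Real.log (1 + G) :=
          Real.log_le_log (by linarith) (by linarith)
        have l2 : m θ / (1 + m θ) ≤ Real.log (1 + m θ) := by
          have h := Real.log_le_sub_one_of_pos (show (0:ℝ) < (1 + m θ)⁻¹ by positivity)
          rw [Real.log_inv] at h
          have h' : m θ / (1 + m θ) = 1 - (1 + m θ)⁻¹ := by
            field_simp
            ring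
          linarith
        have l3 : m θ / 2 ≤ m θ / (1 + m θ) :=
          div_le_div_of_nonneg_left hm0.le (by linarith) (by linarith)
        linarith
      -- rewrite the goal
      show ((a θ / θ : ℝ) : EReal) * logFdist α θ s ≤ ((-(g θ) : ℝ) : EReal)
      rw [logFdist, if_pos hs, Fdist, if_pos hs]
      rw [show cAlpha α * s ^ (-α) *
          (∫ z in Set.Ioi (1:ℝ), z ^ (-(1 + α)) * Real.exp (-(s * z))) = G by
        rw [hGdef, hIdef, hcdef]]
      rw [Real.log_rpow h1G, ← EReal.coe_mul, EReal.coe_le_coe_iff]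
      have heq : a θ / θ * (-(θ / α) * Real.log (1 + G))
          = -(a θ / α * Real.log (1 + G)) := by
        field_simp
      rw [heq, neg_le_neg_iff]
      calc g θ = a θ / α * (m θ / 2) := by
            show a θ * m θ / (2 * α) = _
            field_simp
        _ ≤ a θ / α * Real.log (1 + G) :=
            mul_le_mul_of_nonneg_left hlog1 (by positivity)
    · -- nonpositive argument
      show ((a θ / θ : ℝ) : EReal) * logFdist α θ s ≤ ((-(g θ) : ℝ) : EReal)
      rw [logFdist, if_neg hs, EReal.coe_mul_bot_of_pos (div_pos haθ hθ0)]
      exact bot_le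
  -- Step 3 : conclude
  rw [EReal.tendsto_nhds_bot_iff_real]
  intro M
  filter_upwards [hstep2, hg.eventually_gt_atTop (-M)] with θ h1 h2
  refine lt_of_le_of_lt h1 ?_
  exact_mod_cast (by linarith : -(g θ) < M)
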